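/- arXiv:2402.17143 — 4 statements merged into one kernel-verified Lean document; each statement's English description precedes it below -/
import Mathlib

section
/- Let F be a monotone subadditive quality cost with integer exponent α ≥ 1, let the predicted instance Ĵ be nonempty with 0 < OPT(Ĵ) < ∞, let 𝒥 be the true instance, let OfflineAlg be an optimal offline algorithm (γ_off = 1) and OnlineAlg be γ_on-competitive, and let λ ∈ (0,1). If η₁ = η₂ = 0 (the predictions are exactly correct), then the schedule S output by TPE with confidence parameter λ satisfies cost(S, 𝒥) ≤ (1 + γ_on·2^α·λ^{1/α})·OPT(𝒥). -/
/-! STATEMENT 1 (Corollary 3.5, consistency): with an optimal offline algorithm and exact predictions (η₁ = η₂ = 0), TPE is (1 + γ_on·2^α·λ^{1/α})-consistent. -/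

open MeasureTheory Finset
open scoped ENNReal BigOperators Classical

/-- A job: identifier, release time, processing time, weight. -/
structure Job where
  id : ℕ
  r : ℝ
  p : ℝ
  v : ℝ

noncomputable instance : DecidableEq Job := Classical.decEq _

/-- An instance is valid when release times are nonnegative and processing
times and weights are positive. -/
def ValidInstance (J : Finset Job) : Prop :=
  ∀ j ∈ J, 0 ≤ j.r ∧ 0 < j.p ∧ 0 < j.v

/-- A schedule: speed functions for jobs. -/
abbrev Sched := Job → ℝ → ℝ

/-- `S` is a feasible schedule for the instance `J`. -/
def Feasible (J : Finset Job) (S : Sched) : Prop :=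
  ∀ j ∈ J, Measurable (S j) ∧ (∀ t, 0 ≤ S j t) ∧ (∀ t, t < j.r → S j t = 0) ∧
    (∫ t in Set.Ici j.r, S j t) = j.p

/-- Work profile of job `j` under schedule `S`: remaining work at time `t`. -/
noncomputable def work (S : Sched) (j : Job) (t : ℝ) : ℝ :=
  j.p - ∫ u in Set.Icc j.r t, S j u

/-- Energy consumption of schedule `S` on instance `J`, with exponent `α`. -/
noncomputable def energy (α : ℕ) (J : Finset Job) (S : Sched) : ℝ≥0∞ :=
  ∫⁻ t in Set.Ioi (0 : ℝ), ENNReal.ofReal ((∑ j ∈ J, S j t) ^ α)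

/-- A quality cost function: depends only on the work profiles (and job
parameters), is subadditive, monotone in the work profiles, and monotone
under job-set inclusion. -/
structure QualityCost where
  F : Sched → Finset Job → ℝ≥0∞
  profile_congr : ∀ S S' J, (∀ j ∈ J, ∀ t, work S j t = work S' j t) → F S J = F S' J
  subadd : ∀ S J₁ J₂, Disjoint J₁ J₂ → F S (J₁ ∪ J₂) ≤ F S J₁ + F S J₂
  mono_work : ∀ S S' J, (∀ j ∈ J, ∀ t, j.r ≤ t → work S j t ≤ work S' j t) → F S J ≤ F S' J
  mono_subset : ∀ S J' J, J' ⊆ J → F S J' ≤ F S J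

/-- Total cost of a schedule: energy plus quality cost. -/
noncomputable def cost (Q : QualityCost) (α : ℕ) (S : Sched) (J : Finset Job) : ℝ≥0∞ :=
  energy α J S + Q.F S J

/-- Optimal (offline) cost of an instance. -/
noncomputable def OPT (Q : QualityCost) (α : ℕ) (J : Finset Job) : ℝ≥0∞ :=
  ⨅ (S : Sched) (_ : Feasible J S), cost Q α S J

/-- Jobs of `J` released at or before time `t`. -/
noncomputable def restrictLE (J : Finset Job) (t : ℝ) : Finset Job :=
  J.filter fun j => j.r ≤ t

/-- Jobs of `J` released at or after time `t`. -/
noncomputable def restrictGE (J : Finset Job) (t : ℝ) : Finset Job :=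
  J.filter fun j => t ≤ j.r

/-- `A` is a `γ`-competitive offline algorithm: on every instance it returns a
feasible schedule whose cost is between the optimum and `γ` times the optimum. -/
def OfflineCompetitive (Q : QualityCost) (α : ℕ) (γ : ℝ≥0∞) (A : Finset Job → Sched) : Prop :=
  ∀ K : Finset Job, ValidInstance K →
    Feasible K (A K) ∧ OPT Q α K ≤ cost Q α (A K) K ∧ cost Q α (A K) K ≤ γ * OPT Q α K

/-- `A` is a `γ`-competitive online algorithm: on every instance it returns a
feasible schedule of cost at most `γ` times the optimum. -/
def OnlineCompetitive (Q : QualityCost) (α : ℕ) (γ : ℝ≥0∞) (A : Finset Job → Sched) : Prop :=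
  ∀ K : Finset Job, ValidInstance K →
    Feasible K (A K) ∧ cost Q α (A K) K ≤ γ * OPT Q α K

/-- Cost `OFF(K)` achieved by the offline algorithm `Off` on instance `K`. -/
noncomputable def OFFcost (Q : QualityCost) (α : ℕ) (Off : Finset Job → Sched)
    (K : Finset Job) : ℝ≥0∞ :=
  cost Q α (Off K) K

/-- `S` is the schedule output by the algorithm TPE with offline algorithm `Off`,
online algorithm `On`, prediction `Jhat`, true instance `J` and confidence `lam`:
either `OFF(𝒥_{≤t}) ≤ λ·OFF(Ĵ)` for all times `t ≥ 0` and TPE outputs `On(𝒥)`,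
or TPE switches at the first time `t_λ` with `OFF(𝒥_{≤t_λ}) > λ·OFF(Ĵ)` and
outputs the combination of `OfflineAlg(Ĵ_{≥t_λ})` (for the correctly predicted
jobs `𝒥 ∩ Ĵ_{≥t_λ}`) and `OnlineAlg(𝒥 \ Ĵ_{≥t_λ})` (for all other jobs). -/
def TPEOutput (Q : QualityCost) (α : ℕ) (Off On : Finset Job → Sched)
    (Jhat J : Finset Job) (lam : ℝ) (S : Sched) : Prop :=
  ((∀ t : ℝ, 0 ≤ t →
      OFFcost Q α Off (restrictLE J t) ≤ ENNReal.ofReal lam * OFFcost Q α Off Jhat) ∧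
    S = On J) ∨
  (∃ tl : ℝ, 0 ≤ tl ∧
    ENNReal.ofReal lam * OFFcost Q α Off Jhat < OFFcost Q α Off (restrictLE J tl) ∧
    (∀ t : ℝ, 0 ≤ t →
      ENNReal.ofReal lam * OFFcost Q α Off Jhat < OFFcost Q α Off (restrictLE J t) → tl ≤ t) ∧
    S = fun j t =>
      if j ∈ J ∩ restrictGE Jhat tl then Off (restrictGE Jhat tl) j t
      else On (J \ restrictGE Jhat tl) j t)

/-! Auxiliary lemmas -/


lemma feasible_subset {J' J : Finset Job} {S : Sched} (h : J' ⊆ J) (hS : Feasible J S) :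
    Feasible J' S := fun j hj => hS j (h hj)

lemma valid_subset {J' J : Finset Job} (h : J' ⊆ J) (hJ : ValidInstance J) :
    ValidInstance J' := fun j hj => hJ j (h hj)

lemma energy_mono_subset (α : ℕ) {J' J : Finset Job} {S : Sched} (h : J' ⊆ J)
    (hS : Feasible J S) : energy α J' S ≤ energy α J S := by
  refine lintegral_mono fun t => ?_
  refine ENNReal.ofReal_le_ofReal ?_
  refine pow_le_pow_left₀ (Finset.sum_nonneg fun j hj => (hS j (h hj)).2.1 t) ?_ _
  exact Finset.sum_le_sum_of_subset_of_nonneg h fun j hj _ => (hS j hj).2.1 t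

lemma cost_mono_subset (Q : QualityCost) (α : ℕ) {J' J : Finset Job} {S : Sched}
    (h : J' ⊆ J) (hS : Feasible J S) : cost Q α S J' ≤ cost Q α S J :=
  add_le_add (energy_mono_subset α h hS) (Q.mono_subset S J' J h)

lemma opt_le_cost (Q : QualityCost) (α : ℕ) {J : Finset Job} {S : Sched}
    (hS : Feasible J S) : OPT Q α J ≤ cost Q α S J :=
  iInf₂_le S hS

lemma opt_mono (Q : QualityCost) (α : ℕ) {J' J : Finset Job} (h : J' ⊆ J) :
    OPT Q α J' ≤ OPT Q α J :=
  le_iInf₂ fun S hS =>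
    (opt_le_cost Q α (feasible_subset h hS)).trans (cost_mono_subset Q α h hS)

lemma energy_eq_rpow (α : ℕ) (J : Finset Job) (S : Sched)
    (h : ∀ j ∈ J, ∀ t, 0 ≤ S j t) :
    energy α J S
      = ∫⁻ t in Set.Ioi (0:ℝ), (ENNReal.ofReal (∑ j ∈ J, S j t)) ^ (α:ℝ) := by
  refine lintegral_congr fun t => ?_
  rw [ENNReal.rpow_natCast, ENNReal.ofReal_pow (Finset.sum_nonneg fun j hj => h j hj t)]

lemma feasible_combine {A B : Finset Job} {SA SB : Sched} (hD : Disjoint A B)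
    (hA : Feasible A SA) (hB : Feasible B SB) :
    Feasible (A ∪ B) (fun j t => if j ∈ A then SA j t else SB j t) := by
  intro j hj
  by_cases hjA : j ∈ A
  · simpa only [if_pos hjA] using hA j hjA
  · have hjB : j ∈ B := (Finset.mem_union.mp hj).resolve_left hjA
    simpa only [if_neg hjA] using hB j hjB

lemma cost_combine (Q : QualityCost) {α : ℕ} (hα : 1 ≤ α) {A B : Finset Job}
    {SA SB : Sched} (hD : Disjoint A B) (hA : Feasible A SA) (hB : Feasible B SB) :
    cost Q α (fun j t => if j ∈ A then SA j t else SB j t) (A ∪ B) ≤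
      ((energy α A SA) ^ ((α:ℝ)⁻¹) + (energy α B SB) ^ ((α:ℝ)⁻¹)) ^ (α:ℝ)
        + Q.F SA A + Q.F SB B := by
  set S : Sched := fun j t => if j ∈ A then SA j t else SB j t with hSdef
  have hSA_eq : ∀ j ∈ A, S j = SA j := by
    intro j hj; funext t; simp only [hSdef, if_pos hj]
  have hSB_eq : ∀ j ∈ B, S j = SB j := by
    intro j hj; funext t
    simp only [hSdef, if_neg (Finset.disjoint_right.mp hD hj)]
  -- the two nonneg-speed facts
  have hAn : ∀ j ∈ A, ∀ t, 0 ≤ SA j t := fun j hj t => (hA j hj).2.1 t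
  have hBn : ∀ j ∈ B, ∀ t, 0 ≤ SB j t := fun j hj t => (hB j hj).2.1 t
  -- F part
  have hF : Q.F S (A ∪ B) ≤ Q.F SA A + Q.F SB B := by
    refine (Q.subadd S A B hD).trans ?_
    have h1 : Q.F S A = Q.F SA A := by
      refine Q.profile_congr S SA A fun j hj t => ?_
      unfold work; rw [hSA_eq j hj]
    have h2 : Q.F S B = Q.F SB B := by
      refine Q.profile_congr S SB B fun j hj t => ?_
      unfold work; rw [hSB_eq j hj]
    rw [h1, h2]
  -- energy part
  set f : ℝ → ℝ≥0∞ := fun t => ENNReal.ofReal (∑ j ∈ A, SA j t) with hf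
  set g : ℝ → ℝ≥0∞ := fun t => ENNReal.ofReal (∑ j ∈ B, SB j t) with hg
  have hfm : AEMeasurable f (volume.restrict (Set.Ioi (0:ℝ))) := by
    exact ((Finset.measurable_sum A fun j hj => (hA j hj).1).ennreal_ofReal).aemeasurable
  have hgm : AEMeasurable g (volume.restrict (Set.Ioi (0:ℝ))) := by
    exact ((Finset.measurable_sum B fun j hj => (hB j hj).1).ennreal_ofReal).aemeasurable
  have hαR : (1:ℝ) ≤ (α:ℝ) := by exact_mod_cast hα
  have hα0 : (α:ℝ) ≠ 0 := by positivity
  have hEA : energy α A SA = ∫⁻ t in Set.Ioi (0:ℝ), f t ^ (α:ℝ) :=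
    energy_eq_rpow α A SA hAn
  have hEB : energy α B SB = ∫⁻ t in Set.Ioi (0:ℝ), g t ^ (α:ℝ) :=
    energy_eq_rpow α B SB hBn
  have hEn : energy α (A ∪ B) S = ∫⁻ t in Set.Ioi (0:ℝ), (f + g) t ^ (α:ℝ) := by
    rw [energy_eq_rpow α (A ∪ B) S (by
      intro j hj t
      by_cases hjA : j ∈ A
      · rw [hSA_eq j hjA]; exact hAn j hjA t
      · rw [hSB_eq j ((Finset.mem_union.mp hj).resolve_left hjA)]
        exact hBn j ((Finset.mem_union.mp hj).resolve_left hjA) t)]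
    refine lintegral_congr fun t => ?_
    have hsum : ∑ j ∈ A ∪ B, S j t = (∑ j ∈ A, SA j t) + (∑ j ∈ B, SB j t) := by
      rw [Finset.sum_union hD]
      congr 1
      · exact Finset.sum_congr rfl fun j hj => by rw [hSA_eq j hj]
      · exact Finset.sum_congr rfl fun j hj => by rw [hSB_eq j hj]
    rw [hsum, ENNReal.ofReal_add (Finset.sum_nonneg fun j hj => hAn j hj t)
      (Finset.sum_nonneg fun j hj => hBn j hj t)]
    rfl
  have hmink := ENNReal.lintegral_Lp_add_le hfm hgm hαR
  have hEn_le : energy α (A ∪ B) S ≤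
      ((energy α A SA) ^ ((α:ℝ)⁻¹) + (energy α B SB) ^ ((α:ℝ)⁻¹)) ^ (α:ℝ) := by
    have h1 : energy α (A ∪ B) S =
        ((∫⁻ t in Set.Ioi (0:ℝ), (f + g) t ^ (α:ℝ)) ^ (1/(α:ℝ))) ^ (α:ℝ) := by
      rw [hEn, ← ENNReal.rpow_mul, one_div, inv_mul_cancel₀ hα0, ENNReal.rpow_one]
    rw [h1, hEA, hEB, ← one_div]
    exact ENNReal.rpow_le_rpow hmink (by positivity)
  calc cost Q α S (A ∪ B) = energy α (A ∪ B) S + Q.F S (A ∪ B) := rfl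
    _ ≤ ((energy α A SA) ^ ((α:ℝ)⁻¹) + (energy α B SB) ^ ((α:ℝ)⁻¹)) ^ (α:ℝ)
        + (Q.F SA A + Q.F SB B) := add_le_add hEn_le hF
    _ = _ := by ring

lemma opt_union_zero (Q : QualityCost) {α : ℕ} (hα : 1 ≤ α) {A B : Finset Job}
    (hD : Disjoint A B) (hB0 : OPT Q α B = 0) :
    OPT Q α (A ∪ B) ≤ OPT Q α A := by
  refine le_iInf₂ fun SA hSA => ?_
  have hα0 : (α:ℝ) ≠ 0 := by positivity
  have hkey : ∀ e : ℝ≥0∞, 0 < e → OPT Q α (A ∪ B) ≤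
      ((energy α A SA) ^ ((α:ℝ)⁻¹) + e ^ ((α:ℝ)⁻¹)) ^ (α:ℝ) + Q.F SA A + e := by
    intro e he
    have : ∃ SB, Feasible B SB ∧ cost Q α SB B < e := by
      by_contra h
      push_neg at h
      have : e ≤ OPT Q α B := le_iInf₂ fun SB hSB => h SB hSB
      rw [hB0] at this
      exact absurd this (by simpa using he.ne')
    obtain ⟨SB, hSB, hce⟩ := this
    have hEB : energy α B SB ≤ e := le_trans le_self_add hce.le
    have hFB : Q.F SB B ≤ e := le_trans le_add_self hce.le
    calc OPT Q α (A ∪ B)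
        ≤ cost Q α (fun j t => if j ∈ A then SA j t else SB j t) (A ∪ B) :=
          opt_le_cost Q α (feasible_combine hD hSA hSB)
      _ ≤ ((energy α A SA) ^ ((α:ℝ)⁻¹) + (energy α B SB) ^ ((α:ℝ)⁻¹)) ^ (α:ℝ)
            + Q.F SA A + Q.F SB B := cost_combine Q hα hD hSA hSB
      _ ≤ ((energy α A SA) ^ ((α:ℝ)⁻¹) + e ^ ((α:ℝ)⁻¹)) ^ (α:ℝ) + Q.F SA A + e := by
          gcongr
  have hcont : Continuous (fun e : ℝ≥0∞ =>
      ((energy α A SA) ^ ((α:ℝ)⁻¹) + e ^ ((α:ℝ)⁻¹)) ^ (α:ℝ) + Q.F SA A + e) := by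
    refine Continuous.add (Continuous.add ?_ continuous_const) continuous_id
    exact ENNReal.continuous_rpow_const.comp
      (continuous_const.add ENNReal.continuous_rpow_const)
  have hval : ((energy α A SA) ^ ((α:ℝ)⁻¹) + (0:ℝ≥0∞) ^ ((α:ℝ)⁻¹)) ^ (α:ℝ)
      + Q.F SA A + 0 = cost Q α SA A := by
    rw [ENNReal.zero_rpow_of_pos (by positivity), add_zero, add_zero,
      ← ENNReal.rpow_mul, inv_mul_cancel₀ hα0, ENNReal.rpow_one]
    rfl
  have htend : Filter.Tendsto (fun e : ℝ≥0∞ =>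
      ((energy α A SA) ^ ((α:ℝ)⁻¹) + e ^ ((α:ℝ)⁻¹)) ^ (α:ℝ) + Q.F SA A + e)
      (nhdsWithin 0 (Set.Ioi 0)) (nhds (cost Q α SA A)) := by
    have := hcont.tendsto 0
    rw [hval] at this
    exact this.mono_left nhdsWithin_le_nhds
  have hne : (nhdsWithin (0:ℝ≥0∞) (Set.Ioi 0)).NeBot :=
    nhdsGT_neBot_of_exists_gt ⟨1, by simp⟩
  exact ge_of_tendsto htend (Filter.eventually_iff_exists_mem.mpr
    ⟨Set.Ioi 0, self_mem_nhdsWithin, fun e he => hkey e he⟩)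

lemma key_pow {α : ℕ} (hα : 1 ≤ α) {u v : ℝ} (hv : 0 ≤ v) (hvu : v ≤ u) :
    (u + v) ^ α ≤ u ^ α + (2 ^ α - 1) * (u ^ (α - 1) * v) := by
  have hu : 0 ≤ u := hv.trans hvu
  induction α with
  | zero => omega
  | succ n ih =>
    rcases Nat.eq_or_lt_of_le hα with h1 | h2
    · -- n + 1 = 1
      have hn : n = 0 := by omega
      subst hn
      norm_num
    · have hn1 : 1 ≤ n := by omega
      have ihn := ih hn1
      have hc : (0:ℝ) ≤ 2 ^ n - 1 := by
        have : (1:ℝ) ≤ 2 ^ n := one_le_pow₀ (by norm_num)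
        linarith
      have hstep : (u + v) ^ (n + 1) = (u + v) ^ n * (u + v) := by ring
      have h1 : (u + v) ^ n * (u + v) ≤
          (u ^ n + (2 ^ n - 1) * (u ^ (n - 1) * v)) * (u + v) := by
        refine mul_le_mul_of_nonneg_right ihn (by linarith)
      have hun : u ^ (n - 1) * u = u ^ n := by
        rw [← pow_succ]
        congr 1
        omega
      have hv2 : u ^ (n - 1) * v * v ≤ u ^ n * v := by
        have h3 : u ^ (n - 1) * v ≤ u ^ (n - 1) * u :=
          mul_le_mul_of_nonneg_left hvu (pow_nonneg hu _)
        rw [hun] at h3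
        exact mul_le_mul_of_nonneg_right h3 hv
      have hexp : (u + v) ^ (n + 1) ≤ u ^ (n + 1) +
          (2 * (2 ^ n - 1) + 1) * (u ^ n * v) := by
        rw [hstep]
        refine h1.trans ?_
        have hexpand : (u ^ n + (2 ^ n - 1) * (u ^ (n - 1) * v)) * (u + v)
            = u ^ (n+1) + u ^ n * v + (2 ^ n - 1) * (u ^ (n-1) * u * v)
              + (2 ^ n - 1) * (u ^ (n - 1) * v * v) := by ring
        rw [hexpand, hun]
        nlinarith [mul_le_mul_of_nonneg_left hv2 hc]
      refine hexp.trans ?_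
      have : (2:ℝ) * (2 ^ n - 1) + 1 = 2 ^ (n + 1) - 1 := by ring
      rw [this]
      simp

lemma final_arith {α : ℕ} (hα : 1 ≤ α) {x y fa fb p γ lam' : ℝ}
    (hx : 0 ≤ x) (hy : 0 ≤ y) (hfa : 0 ≤ fa) (hfb : 0 ≤ fb) (hp : 0 < p)
    (hγ : 1 ≤ γ) (hlam : 0 < lam') (hlam1 : lam' < 1)
    (h1 : x + fa ≤ p) (h2 : y + fb ≤ γ * (lam' * p)) :
    (x ^ ((α:ℝ)⁻¹) + y ^ ((α:ℝ)⁻¹)) ^ α + fa + fb ≤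
      (1 + γ * 2 ^ α * lam' ^ ((α:ℝ)⁻¹)) * p := by
  have hα0 : α ≠ 0 := by omega
  have hαR : (1:ℝ) ≤ (α:ℝ) := by exact_mod_cast hα
  have hinv0 : 0 < (α:ℝ)⁻¹ := by positivity
  have hinv1 : (α:ℝ)⁻¹ ≤ 1 := by
    rw [inv_le_one_iff₀]; right; exact hαR
  set u := x ^ ((α:ℝ)⁻¹) with hu
  set v := y ^ ((α:ℝ)⁻¹) with hv
  have hu0 : 0 ≤ u := Real.rpow_nonneg hx _
  have hv0 : 0 ≤ v := Real.rpow_nonneg hy _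
  have huα : u ^ α = x := Real.rpow_inv_natCast_pow hx hα0
  have hvα : v ^ α = y := Real.rpow_inv_natCast_pow hy hα0
  have hγ0 : (0:ℝ) ≤ γ := by linarith
  -- facts
  have hlam_le : lam' ≤ lam' ^ ((α:ℝ)⁻¹) := by
    have := Real.rpow_le_rpow_of_exponent_ge hlam hlam1.le hinv1
    rwa [Real.rpow_one] at this
  have hγle : γ ^ ((α:ℝ)⁻¹) ≤ γ := by
    have := Real.rpow_le_rpow_of_exponent_le hγ hinv1
    rwa [Real.rpow_one] at this
  have hlr0 : 0 ≤ lam' ^ ((α:ℝ)⁻¹) := Real.rpow_nonneg hlam.le _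
  have h2pow : (1:ℝ) ≤ 2 ^ α := one_le_pow₀ (by norm_num)
  have hfb' : fb ≤ γ * (lam' * p) := by linarith
  have hfb'' : fb ≤ γ * lam' ^ ((α:ℝ)⁻¹) * p := by
    calc fb ≤ γ * (lam' * p) := hfb'
      _ ≤ γ * (lam' ^ ((α:ℝ)⁻¹) * p) := by
          refine mul_le_mul_of_nonneg_left ?_ hγ0
          exact mul_le_mul_of_nonneg_right hlam_le hp.le
      _ = γ * lam' ^ ((α:ℝ)⁻¹) * p := by ring
  rcases le_total v u with hvu | huv
  · -- case v ≤ u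
    have hkey := key_pow hα hv0 hvu
    -- bound u^(α-1) * v
    have huP : u ≤ p ^ ((α:ℝ)⁻¹) := Real.rpow_le_rpow hx (by linarith) hinv0.le
    have hvP : v ≤ (γ * (lam' * p)) ^ ((α:ℝ)⁻¹) :=
      Real.rpow_le_rpow hy (by linarith) hinv0.le
    have hbd : u ^ (α - 1) * v ≤ (p ^ ((α:ℝ)⁻¹)) ^ (α - 1) *
        (γ * (lam' * p)) ^ ((α:ℝ)⁻¹) := by
      refine mul_le_mul ?_ hvP hv0 (by positivity)
      exact pow_le_pow_left₀ hu0 huP _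
    have hsplit : (γ * (lam' * p)) ^ ((α:ℝ)⁻¹)
        = γ ^ ((α:ℝ)⁻¹) * (lam' ^ ((α:ℝ)⁻¹) * p ^ ((α:ℝ)⁻¹)) := by
      rw [Real.mul_rpow hγ0 (by positivity), Real.mul_rpow hlam.le hp.le]
    have hpp : (p ^ ((α:ℝ)⁻¹)) ^ (α - 1) * p ^ ((α:ℝ)⁻¹) = p := by
      rw [← pow_succ]
      have : α - 1 + 1 = α := by omega
      rw [this]
      exact Real.rpow_inv_natCast_pow hp.le hα0
    have hbd2 : u ^ (α - 1) * v ≤ γ * lam' ^ ((α:ℝ)⁻¹) * p := by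
      calc u ^ (α - 1) * v ≤ (p ^ ((α:ℝ)⁻¹)) ^ (α - 1) *
          (γ ^ ((α:ℝ)⁻¹) * (lam' ^ ((α:ℝ)⁻¹) * p ^ ((α:ℝ)⁻¹))) := by
            rw [← hsplit]; exact hbd
        _ = γ ^ ((α:ℝ)⁻¹) * lam' ^ ((α:ℝ)⁻¹) * ((p ^ ((α:ℝ)⁻¹)) ^ (α - 1) * p ^ ((α:ℝ)⁻¹)) := by
            ring
        _ = γ ^ ((α:ℝ)⁻¹) * lam' ^ ((α:ℝ)⁻¹) * p := by rw [hpp]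
        _ ≤ γ * lam' ^ ((α:ℝ)⁻¹) * p := by
            refine mul_le_mul_of_nonneg_right ?_ hp.le
            exact mul_le_mul_of_nonneg_right hγle hlr0
    have hc : (0:ℝ) ≤ 2 ^ α - 1 := by linarith
    have : (u + v) ^ α ≤ x + (2 ^ α - 1) * (γ * lam' ^ ((α:ℝ)⁻¹) * p) := by
      rw [← huα]
      refine hkey.trans ?_
      have := mul_le_mul_of_nonneg_left hbd2 hc
      linarith
    have hγlp : 0 ≤ γ * lam' ^ ((α:ℝ)⁻¹) * p := by positivity
    nlinarith [this, hfb'']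
  · -- case u ≤ v
    have h2v : (u + v) ^ α ≤ 2 ^ α * y := by
      calc (u + v) ^ α ≤ (2 * v) ^ α := by
            refine pow_le_pow_left₀ (by linarith) (by linarith) _
        _ = 2 ^ α * v ^ α := by rw [mul_pow]
        _ = 2 ^ α * y := by rw [hvα]
    have hbig : 2 ^ α * y + fb ≤ 2 ^ α * (γ * (lam' * p)) := by
      nlinarith
    have hlast : 2 ^ α * (γ * (lam' * p)) ≤ γ * 2 ^ α * lam' ^ ((α:ℝ)⁻¹) * p := by
      have h := mul_le_mul_of_nonneg_right hlam_le hp.le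
      calc 2 ^ α * (γ * (lam' * p)) = γ * 2 ^ α * (lam' * p) := by ring
        _ ≤ γ * 2 ^ α * (lam' ^ ((α:ℝ)⁻¹) * p) :=
            mul_le_mul_of_nonneg_left h (by positivity)
        _ = γ * 2 ^ α * lam' ^ ((α:ℝ)⁻¹) * p := by ring
    have hRHS : (1 + γ * 2 ^ α * lam' ^ ((α:ℝ)⁻¹)) * p
        = p + γ * 2 ^ α * lam' ^ ((α:ℝ)⁻¹) * p := by ring
    rw [hRHS]
    linarith


/-- **Corollary 3.5 (consistency).** If the offline algorithm is optimal
(`γ_off = 1`) and the predictions are exactly correct (`η₁ = η₂ = 0`), then for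
any `λ ∈ (0,1)` the schedule output by TPE satisfies
`cost(S,𝒥) ≤ (1 + γ_on·2^α·λ^{1/α})·OPT(𝒥)`. -/
theorem tpe_consistency (Q : QualityCost) (α : ℕ) (hα : 1 ≤ α)
    (γon : ℝ≥0∞) (Off On : Finset Job → Sched)
    (hOff : OfflineCompetitive Q α 1 Off) (hOn : OnlineCompetitive Q α γon On)
    (Jhat J : Finset Job) (hJhatV : ValidInstance Jhat) (hJV : ValidInstance J)
    (hne : Jhat.Nonempty) (hpos : 0 < OPT Q α Jhat) (hfin : OPT Q α Jhat < ⊤)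
    (lam : ℝ) (hlam0 : 0 < lam) (hlam1 : lam < 1)
    (hη₁ : OPT Q α (J \ Jhat) / OPT Q α Jhat = 0)
    (hη₂ : OPT Q α (Jhat \ J) / OPT Q α Jhat = 0)
    (S : Sched) (hS : TPEOutput Q α Off On Jhat J lam S) :
    cost Q α S J ≤
      (1 + γon * 2 ^ α * ENNReal.ofReal lam ^ ((α : ℝ)⁻¹)) * OPT Q α J := by
  classical
  -- basic consequences of the error hypotheses
  have hfin' : OPT Q α Jhat ≠ ⊤ := hfin.ne
  have h01 : OPT Q α (J \ Jhat) = 0 := by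
    rcases (ENNReal.div_eq_zero_iff.mp hη₁) with h | h
    · exact h
    · exact absurd h hfin'
  have h02 : OPT Q α (Jhat \ J) = 0 := by
    rcases (ENNReal.div_eq_zero_iff.mp hη₂) with h | h
    · exact h
    · exact absurd h hfin'
  -- OPT J = OPT Jhat
  have hJdecomp : (J ∩ Jhat) ∪ (J \ Jhat) = J := by
    ext j; simp only [Finset.mem_union, Finset.mem_inter, Finset.mem_sdiff]; tauto
  have hJhatdecomp : (Jhat ∩ J) ∪ (Jhat \ J) = Jhat := by
    ext j; simp only [Finset.mem_union, Finset.mem_inter, Finset.mem_sdiff]; tauto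
  have hdis1 : Disjoint (J ∩ Jhat) (J \ Jhat) := by
    rw [Finset.disjoint_left]
    intro j hj hj'
    exact (Finset.mem_sdiff.mp hj').2 (Finset.mem_inter.mp hj).2
  have hdis2 : Disjoint (Jhat ∩ J) (Jhat \ J) := by
    rw [Finset.disjoint_left]
    intro j hj hj'
    exact (Finset.mem_sdiff.mp hj').2 (Finset.mem_inter.mp hj).2
  have hJle : OPT Q α J ≤ OPT Q α (J ∩ Jhat) := by
    have := opt_union_zero Q hα hdis1 h01
    rwa [hJdecomp] at this
  have hJhatle : OPT Q α Jhat ≤ OPT Q α (J ∩ Jhat) := by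
    have := opt_union_zero Q hα hdis2 h02
    rw [hJhatdecomp] at this
    rwa [Finset.inter_comm] at this
  have hPeq : OPT Q α J = OPT Q α Jhat := by
    refine le_antisymm ?_ ?_
    · exact hJle.trans (opt_mono Q α (by exact Finset.inter_subset_right))
    · exact hJhatle.trans (opt_mono Q α (by exact Finset.inter_subset_left))
  have hP0 : 0 < OPT Q α J := hPeq ▸ hpos
  have hPtop : OPT Q α J ≠ ⊤ := by rw [hPeq]; exact hfin'
  -- OFF Jhat = OPT Jhat facts
  have hOffJhat := hOff Jhat hJhatV
  have hOFFle : OFFcost Q α Off Jhat ≤ OPT Q α Jhat := by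
    have := hOffJhat.2.2; rwa [one_mul] at this
  have hOFFge : OPT Q α Jhat ≤ OFFcost Q α Off Jhat := hOffJhat.2.1
  rcases hS with ⟨hall, hSeq⟩ | ⟨tl, htl0, hviol, hmin, hSeq⟩
  · -- case 1: never switches; we derive a contradiction
    exfalso
    have hJne : J.Nonempty := by
      by_contra h
      rw [Finset.not_nonempty_iff_eq_empty] at h
      have : OPT Q α J ≤ OPT Q α (J \ Jhat) := opt_mono Q α (by rw [h]; simp)
      rw [h01] at this
      exact absurd (hPeq ▸ (le_antisymm this zero_le)) (by
        rw [hPeq] at this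
        exact fun _ => absurd (le_antisymm this zero_le) hpos.ne')
    set t0 := J.sup' hJne Job.r with ht0def
    obtain ⟨j0, hj0⟩ := hJne
    have ht00 : 0 ≤ t0 := le_trans (hJV j0 hj0).1 (Finset.le_sup' Job.r hj0)
    have hres : restrictLE J t0 = J := by
      unfold restrictLE
      rw [Finset.filter_eq_self]
      exact fun j hj => Finset.le_sup' Job.r hj
    have h := hall t0 ht00
    rw [hres] at h
    have hOPTJ : OPT Q α J ≤ OFFcost Q α Off J := (hOff J hJV).2.1
    have hlt : ENNReal.ofReal lam * OFFcost Q α Off Jhat < OPT Q α J := by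
      calc ENNReal.ofReal lam * OFFcost Q α Off Jhat
          ≤ ENNReal.ofReal lam * OPT Q α J := by
            rw [hPeq]; exact mul_le_mul_right hOFFle _
        _ < 1 * OPT Q α J := by
            refine ENNReal.mul_lt_mul_left hP0.ne' hPtop ?_
            exact ENNReal.ofReal_lt_one.mpr hlam1
        _ = OPT Q α J := one_mul _
    exact absurd (hOPTJ.trans h) (not_le.mpr hlt)
  · -- case 2: switch at time tl
    set X := restrictGE Jhat tl with hXdef
    set A := J ∩ X with hAdef
    set B := J \ X with hBdef
    have hXsub : X ⊆ Jhat := Finset.filter_subset _ _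
    have hXV : ValidInstance X := valid_subset hXsub hJhatV
    have hBsub : B ⊆ J := Finset.sdiff_subset
    have hBV : ValidInstance B := valid_subset hBsub hJV
    have hOffX := hOff X hXV
    have hOnB := hOn B hBV
    have hSA : Feasible A (Off X) :=
      feasible_subset Finset.inter_subset_right hOffX.1
    have hdisj : Disjoint A B := by
      rw [Finset.disjoint_left]
      intro j hj hj'
      exact (Finset.mem_sdiff.mp hj').2 (Finset.mem_inter.mp hj).2
    have hAB : A ∪ B = J := by
      ext j
      simp only [hAdef, hBdef, Finset.mem_union, Finset.mem_inter, Finset.mem_sdiff]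
      tauto
    have hcomb : cost Q α S J ≤
        ((energy α A (Off X)) ^ ((α:ℝ)⁻¹) + (energy α B (On B)) ^ ((α:ℝ)⁻¹)) ^ (α:ℝ)
          + Q.F (Off X) A + Q.F (On B) B := by
      rw [hSeq, ← hAB]
      exact cost_combine Q hα hdisj hSA hOnB.1
    set P := OPT Q α J with hPdef
    set Ea := energy α X (Off X) with hEadef
    set Fa := Q.F (Off X) X with hFadef
    set Eb := energy α B (On B) with hEbdef
    set Fb := Q.F (On B) B with hFbdef
    have hEA' : energy α A (Off X) ≤ Ea :=
      energy_mono_subset α Finset.inter_subset_right hOffX.1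
    have hFA' : Q.F (Off X) A ≤ Fa := Q.mono_subset _ _ _ Finset.inter_subset_right
    have hCa : Ea + Fa ≤ P := by
      have h1 : cost Q α (Off X) X ≤ 1 * OPT Q α X := hOffX.2.2
      rw [one_mul] at h1
      calc Ea + Fa = cost Q α (Off X) X := rfl
        _ ≤ OPT Q α X := h1
        _ ≤ OPT Q α Jhat := opt_mono Q α hXsub
        _ = P := hPeq.symm
    -- bound on OPT B
    have hOPTB : OPT Q α B ≤ ENNReal.ofReal lam * P := by
      set C1 := B.filter (fun j => j.r < tl) with hC1def
      set C2 := B.filter (fun j => ¬ j.r < tl) with hC2def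
      have hBsplit : C1 ∪ C2 = B := Finset.filter_union_filter_not_eq _ _
      have hdisC : Disjoint C1 C2 := Finset.disjoint_filter_filter_not _ _ _
      have hC2sub : C2 ⊆ J \ Jhat := by
        intro j hj
        rw [hC2def, Finset.mem_filter] at hj
        obtain ⟨hjB, hjnlt⟩ := hj
        rw [hBdef, Finset.mem_sdiff] at hjB
        rw [Finset.mem_sdiff]
        refine ⟨hjB.1, fun hjJhat => hjB.2 ?_⟩
        rw [hXdef]
        unfold restrictGE
        exact Finset.mem_filter.mpr ⟨hjJhat, not_lt.mp hjnlt⟩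
      have hC20 : OPT Q α C2 = 0 :=
        le_antisymm (le_trans (opt_mono Q α hC2sub) (le_of_eq h01)) zero_le
      have hBC1 : OPT Q α B ≤ OPT Q α C1 := by
        have := opt_union_zero Q hα hdisC hC20
        rwa [hBsplit] at this
      set Jlt := J.filter (fun j => j.r < tl) with hJltdef
      have hC1sub : C1 ⊆ Jlt := by
        intro j hj
        rw [hC1def, Finset.mem_filter] at hj
        exact Finset.mem_filter.mpr ⟨hBsub hj.1, hj.2⟩
      have hJltle : OPT Q α Jlt ≤ ENNReal.ofReal lam * OFFcost Q α Off Jhat := by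
        rcases Finset.eq_empty_or_nonempty Jlt with hE | hNE
        · rw [hE]
          have h5 : OPT Q α (∅ : Finset Job) ≤ OPT Q α (J \ Jhat) :=
            opt_mono Q α (Finset.empty_subset _)
          rw [h01] at h5
          exact le_trans h5 zero_le
        · set ts := Jlt.sup' hNE Job.r with htsdef
          obtain ⟨j1, hj1⟩ := hNE
          have hts0 : 0 ≤ ts :=
            le_trans (hJV j1 (Finset.mem_filter.mp hj1).1).1 (Finset.le_sup' Job.r hj1)
          have htslt : ts < tl := by
            rw [htsdef]
            exact (Finset.sup'_lt_iff ⟨j1, hj1⟩).mpr fun j hj => (Finset.mem_filter.mp hj).2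
          have hJlteq : restrictLE J ts = Jlt := by
            ext j
            unfold restrictLE
            rw [Finset.mem_filter, hJltdef, Finset.mem_filter]
            constructor
            · rintro ⟨hjJ, hle⟩
              exact ⟨hjJ, lt_of_le_of_lt hle htslt⟩
            · rintro ⟨hjJ, hlt'⟩
              exact ⟨hjJ, Finset.le_sup' Job.r (Finset.mem_filter.mpr ⟨hjJ, hlt'⟩)⟩
          have hOFFts : OFFcost Q α Off (restrictLE J ts) ≤
              ENNReal.ofReal lam * OFFcost Q α Off Jhat := by
            by_contra h
            exact absurd (hmin ts hts0 (not_le.mp h)) (not_le.mpr htslt)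
          have hVJlt : ValidInstance Jlt := valid_subset (Finset.filter_subset _ _) hJV
          have h3 : OPT Q α Jlt ≤ OFFcost Q α Off Jlt := (hOff Jlt hVJlt).2.1
          rw [hJlteq] at hOFFts
          exact h3.trans hOFFts
      calc OPT Q α B ≤ OPT Q α C1 := hBC1
        _ ≤ OPT Q α Jlt := opt_mono Q α hC1sub
        _ ≤ ENNReal.ofReal lam * OFFcost Q α Off Jhat := hJltle
        _ ≤ ENNReal.ofReal lam * OPT Q α Jhat := mul_le_mul_right hOFFle _
        _ = ENNReal.ofReal lam * P := by rw [hPeq]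
    have hCb : Eb + Fb ≤ γon * (ENNReal.ofReal lam * P) := by
      calc Eb + Fb = cost Q α (On B) B := rfl
        _ ≤ γon * OPT Q α B := hOnB.2
        _ ≤ γon * (ENNReal.ofReal lam * P) := mul_le_mul_right hOPTB _
    -- γon ≥ 1
    have hγ1 : (1:ℝ≥0∞) ≤ γon := by
      have h2 : OPT Q α Jhat ≤ γon * OPT Q α Jhat :=
        (opt_le_cost Q α (hOn Jhat hJhatV).1).trans (hOn Jhat hJhatV).2
      by_contra hc
      push_neg at hc
      have h4 : γon * OPT Q α Jhat < 1 * OPT Q α Jhat :=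
        ENNReal.mul_lt_mul_left hpos.ne' hfin' hc
      rw [one_mul] at h4
      exact absurd h2 (not_le.mpr h4)
    rcases eq_or_ne γon ⊤ with hγtop | hγtop
    · -- RHS is ⊤
      have hrpos : (0:ℝ≥0∞) < ENNReal.ofReal lam ^ ((α:ℝ)⁻¹) :=
        ENNReal.rpow_pos (ENNReal.ofReal_pos.mpr hlam0) ENNReal.ofReal_ne_top
      have hRT : (1 + γon * 2 ^ α * ENNReal.ofReal lam ^ ((α:ℝ)⁻¹)) * OPT Q α J = ⊤ := by
        rw [hγtop, ENNReal.top_mul (by positivity : (2:ℝ≥0∞) ^ α ≠ 0),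
          ENNReal.top_mul hrpos.ne', add_top,
          ENNReal.top_mul hP0.ne']
      rw [hRT]
      exact le_top
    · -- main computation
      have hEaF : Ea ≠ ⊤ := ne_top_of_le_ne_top hPtop (le_self_add.trans hCa)
      have hFaF : Fa ≠ ⊤ := ne_top_of_le_ne_top hPtop (le_add_self.trans hCa)
      have hGF : γon * (ENNReal.ofReal lam * P) ≠ ⊤ :=
        ENNReal.mul_ne_top hγtop (ENNReal.mul_ne_top ENNReal.ofReal_ne_top hPtop)
      have hEbF : Eb ≠ ⊤ := ne_top_of_le_ne_top hGF (le_self_add.trans hCb)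
      have hFbF : Fb ≠ ⊤ := ne_top_of_le_ne_top hGF (le_add_self.trans hCb)
      have hT : cost Q α S J ≤
          (Ea ^ ((α:ℝ)⁻¹) + Eb ^ ((α:ℝ)⁻¹)) ^ (α:ℝ) + Fa + Fb := by
        refine hcomb.trans ?_
        gcongr
      refine hT.trans ?_
      have hinv0 : (0:ℝ) ≤ (α:ℝ)⁻¹ := by positivity
      have hTne : (Ea ^ ((α:ℝ)⁻¹) + Eb ^ ((α:ℝ)⁻¹)) ^ (α:ℝ) + Fa + Fb ≠ ⊤ := by
        refine ENNReal.add_ne_top.mpr ⟨ENNReal.add_ne_top.mpr ⟨?_, hFaF⟩, hFbF⟩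
        refine ENNReal.rpow_ne_top_of_nonneg (by positivity) ?_
        exact ENNReal.add_ne_top.mpr ⟨ENNReal.rpow_ne_top_of_nonneg hinv0 hEaF,
          ENNReal.rpow_ne_top_of_nonneg hinv0 hEbF⟩
      have hRne : (1 + γon * 2 ^ α * ENNReal.ofReal lam ^ ((α:ℝ)⁻¹)) * OPT Q α J ≠ ⊤ := by
        refine ENNReal.mul_ne_top (ENNReal.add_ne_top.mpr ⟨ENNReal.one_ne_top, ?_⟩) hPtop
        exact ENNReal.mul_ne_top (ENNReal.mul_ne_top hγtop (by simp))
          (ENNReal.rpow_ne_top_of_nonneg hinv0 ENNReal.ofReal_ne_top)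
      rw [← ENNReal.toReal_le_toReal hTne hRne]
      have hsumne : Ea ^ ((α:ℝ)⁻¹) + Eb ^ ((α:ℝ)⁻¹) ≠ ⊤ :=
        ENNReal.add_ne_top.mpr ⟨ENNReal.rpow_ne_top_of_nonneg hinv0 hEaF,
          ENNReal.rpow_ne_top_of_nonneg hinv0 hEbF⟩
      have hTto : ((Ea ^ ((α:ℝ)⁻¹) + Eb ^ ((α:ℝ)⁻¹)) ^ (α:ℝ) + Fa + Fb).toReal
          = (Ea.toReal ^ ((α:ℝ)⁻¹) + Eb.toReal ^ ((α:ℝ)⁻¹)) ^ α + Fa.toReal + Fb.toReal := by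
        rw [ENNReal.toReal_add (ENNReal.add_ne_top.mpr
            ⟨ENNReal.rpow_ne_top_of_nonneg (by positivity) hsumne, hFaF⟩) hFbF,
          ENNReal.toReal_add (ENNReal.rpow_ne_top_of_nonneg (by positivity) hsumne) hFaF,
          ← ENNReal.toReal_rpow, ENNReal.toReal_add
            (ENNReal.rpow_ne_top_of_nonneg hinv0 hEaF)
            (ENNReal.rpow_ne_top_of_nonneg hinv0 hEbF),
          ← ENNReal.toReal_rpow, ← ENNReal.toReal_rpow, Real.rpow_natCast]
      have hRto : ((1 + γon * 2 ^ α * ENNReal.ofReal lam ^ ((α:ℝ)⁻¹)) * OPT Q α J).toReal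
          = (1 + γon.toReal * 2 ^ α * lam ^ ((α:ℝ)⁻¹)) * P.toReal := by
        rw [ENNReal.toReal_mul, ENNReal.toReal_add ENNReal.one_ne_top
            (ENNReal.mul_ne_top (ENNReal.mul_ne_top hγtop (by simp))
              (ENNReal.rpow_ne_top_of_nonneg hinv0 ENNReal.ofReal_ne_top)),
          ENNReal.toReal_one, ENNReal.toReal_mul, ENNReal.toReal_mul,
          ← ENNReal.toReal_rpow, ENNReal.toReal_ofReal hlam0.le,
          ENNReal.toReal_pow, ENNReal.toReal_ofNat]
      rw [hTto, hRto]
      have hpReal : 0 < P.toReal := ENNReal.toReal_pos hP0.ne' hPtop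
      have hγReal : (1:ℝ) ≤ γon.toReal := by
        rw [← ENNReal.toReal_one]
        exact (ENNReal.toReal_le_toReal ENNReal.one_ne_top hγtop).mpr hγ1
      have h1r : Ea.toReal + Fa.toReal ≤ P.toReal := by
        rw [← ENNReal.toReal_add hEaF hFaF]
        exact (ENNReal.toReal_le_toReal (ENNReal.add_ne_top.mpr ⟨hEaF, hFaF⟩) hPtop).mpr hCa
      have h2r : Eb.toReal + Fb.toReal ≤ γon.toReal * (lam * P.toReal) := by
        rw [← ENNReal.toReal_add hEbF hFbF]
        have := (ENNReal.toReal_le_toReal (ENNReal.add_ne_top.mpr ⟨hEbF, hFbF⟩) hGF).mpr hCb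
        rwa [ENNReal.toReal_mul, ENNReal.toReal_mul, ENNReal.toReal_ofReal hlam0.le] at this
      exact final_arith hα ENNReal.toReal_nonneg ENNReal.toReal_nonneg
        ENNReal.toReal_nonneg ENNReal.toReal_nonneg hpReal hγReal hlam0 hlam1 h1r h2r
end

section
/- Let α ≥ 1 be an integer, let 𝒥₁ and 𝒥₂ be disjoint instances, and let S₁ and S₂ be feasible schedules for 𝒥₁ and 𝒥₂ respectively. Consider the schedule S = S₁ + S₂ for 𝒥₁ ∪ 𝒥₂ which at each time t runs the machine at total speed s₁(t) + s₂(t), processing each job j ∈ 𝒥₁ at speed s_{1,j}(t) and each job j ∈ 𝒥₂ at speed s_{2,j}(t). Then cost(S, 𝒥₁ ∪ 𝒥₂) ≤ ( cost(S₁, 𝒥₁)^{1/α} + cost(S₂, 𝒥₂)^{1/α} )^α. -/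
/-!
Energy-efficient scheduling framework (Balkanski–Perivier–Stein–Wei).

A job has an identifier, a release time, a processing time and a weight.
A schedule assigns a speed function to every job.  The energy is
`∫ (total speed)^α`, a quality cost `F` is a monotone subadditive function of
the work profiles, and `cost = energy + F`.

STATEMENT 3 (Lemma 3.1): combining two feasible schedules for disjoint
instances gives
`cost(S, 𝒥₁ ∪ 𝒥₂) ≤ (cost(S₁,𝒥₁)^{1/α} + cost(S₂,𝒥₂)^{1/α})^α`.
-/

open MeasureTheory Finset
open scoped ENNReal BigOperators Classical

/-- **Lemma 3.1**: the sum of two feasible schedules for disjoint instances has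
cost at most `(cost(S₁,𝒥₁)^{1/α} + cost(S₂,𝒥₂)^{1/α})^α`. -/
theorem cost_union_of_two_schedules (Q : QualityCost) (α : ℕ) (hα : 1 ≤ α)
    (J₁ J₂ : Finset Job) (hdisj : Disjoint J₁ J₂)
    (hJ₁ : ValidInstance J₁) (hJ₂ : ValidInstance J₂)
    (S₁ S₂ : Sched) (h₁ : Feasible J₁ S₁) (h₂ : Feasible J₂ S₂)
    (S : Sched) (hS : ∀ j t, S j t = if j ∈ J₁ then S₁ j t else S₂ j t) :
    cost Q α S (J₁ ∪ J₂) ≤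
      (cost Q α S₁ J₁ ^ ((α : ℝ)⁻¹) + cost Q α S₂ J₂ ^ ((α : ℝ)⁻¹)) ^ (α : ℝ) := by
  classical
  set A : ℝ := (α : ℝ) with hAdef
  have hA1 : (1 : ℝ) ≤ A := by rw [hAdef]; exact_mod_cast hα
  have hApos : 0 < A := lt_of_lt_of_le zero_lt_one hA1
  have hAne : A ≠ 0 := ne_of_gt hApos
  -- schedule agreement
  have hS1 : ∀ j ∈ J₁, ∀ t, S j t = S₁ j t := by
    intro j hj t; rw [hS]; simp [hj]
  have hS2 : ∀ j ∈ J₂, ∀ t, S j t = S₂ j t := by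
    intro j hj t; rw [hS]
    have : j ∉ J₁ := fun h => (Finset.disjoint_left.mp hdisj h) hj
    simp [this]
  -- auxiliary functions
  set f : ℝ → ℝ≥0∞ := fun t =>
    if t = -1 then (Q.F S₁ J₁) ^ (A⁻¹) else ENNReal.ofReal (∑ j ∈ J₁, S₁ j t) with hfdef
  set g : ℝ → ℝ≥0∞ := fun t =>
    if t = -2 then (Q.F S₂ J₂) ^ (A⁻¹) else ENNReal.ofReal (∑ j ∈ J₂, S₂ j t) with hgdef
  set μ : Measure ℝ :=
    (volume.restrict (Set.Ioi 0) + Measure.dirac (-1)) + Measure.dirac (-2) with hμdef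
  have hf : Measurable f := by
    apply Measurable.ite (measurableSet_eq) measurable_const
    exact (Finset.measurable_sum _ fun j hj => (h₁ j hj).1).ennreal_ofReal
  have hg : Measurable g := by
    apply Measurable.ite (measurableSet_eq) measurable_const
    exact (Finset.measurable_sum _ fun j hj => (h₂ j hj).1).ennreal_ofReal
  have hrpow : ∀ x : ℝ≥0∞, ((x ^ (A⁻¹)) ^ A) = x := by
    intro x
    rw [← ENNReal.rpow_mul, inv_mul_cancel₀ hAne, ENNReal.rpow_one]
  -- lintegral over μ of a measurable function
  have hint : ∀ h : ℝ → ℝ≥0∞, Measurable h →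
      ∫⁻ t, h t ∂μ = (∫⁻ t in Set.Ioi (0:ℝ), h t) + h (-1) + h (-2) := by
    intro h hh
    rw [hμdef, lintegral_add_measure, lintegral_add_measure, lintegral_dirac' _ hh,
      lintegral_dirac' _ hh]
  -- f values
  have hfval : ∀ t : ℝ, 0 < t → f t = ENNReal.ofReal (∑ j ∈ J₁, S₁ j t) := by
    intro t ht; rw [hfdef]; simp only []; rw [if_neg (by linarith)]
  have hgval : ∀ t : ℝ, 0 < t → g t = ENNReal.ofReal (∑ j ∈ J₂, S₂ j t) := by
    intro t ht; rw [hgdef]; simp only []; rw [if_neg (by linarith)]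
  have hzero1 : ∀ t : ℝ, t < 0 → (∑ j ∈ J₁, S₁ j t) = 0 := by
    intro t ht
    refine Finset.sum_eq_zero fun j hj => (h₁ j hj).2.2.1 t ?_
    have := (hJ₁ j hj).1; linarith
  have hzero2 : ∀ t : ℝ, t < 0 → (∑ j ∈ J₂, S₂ j t) = 0 := by
    intro t ht
    refine Finset.sum_eq_zero fun j hj => (h₂ j hj).2.2.1 t ?_
    have := (hJ₂ j hj).1; linarith
  have hfm1 : f (-1) = (Q.F S₁ J₁) ^ (A⁻¹) := if_pos rfl
  have hfm2 : f (-2) = 0 := by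
    rw [hfdef]; simp only []
    rw [if_neg (by norm_num), hzero1 (-2) (by norm_num)]; simp
  have hgm1 : g (-1) = 0 := by
    rw [hgdef]; simp only []
    rw [if_neg (by norm_num), hzero2 (-1) (by norm_num)]; simp
  have hgm2 : g (-2) = (Q.F S₂ J₂) ^ (A⁻¹) := if_pos rfl
  -- pointwise rpow-to-pow conversion
  have hofpow : ∀ (x : ℝ), 0 ≤ x → (ENNReal.ofReal x) ^ A = ENNReal.ofReal (x ^ α) := by
    intro x hx
    rw [ENNReal.ofReal_rpow_of_nonneg hx (le_of_lt hApos), hAdef, Real.rpow_natCast]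
  have hnn1 : ∀ t, 0 ≤ ∑ j ∈ J₁, S₁ j t := fun t =>
    Finset.sum_nonneg fun j hj => (h₁ j hj).2.1 t
  have hnn2 : ∀ t, 0 ≤ ∑ j ∈ J₂, S₂ j t := fun t =>
    Finset.sum_nonneg fun j hj => (h₂ j hj).2.1 t
  -- integral of f^A over μ equals cost S₁ J₁
  have hIf : ∫⁻ t, f t ^ A ∂μ = cost Q α S₁ J₁ := by
    rw [hint _ (hf.pow_const A)]
    have h1 : (∫⁻ t in Set.Ioi (0:ℝ), f t ^ A) = energy α J₁ S₁ := by
      rw [energy]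
      refine setLIntegral_congr_fun measurableSet_Ioi ?_
      intro t ht; beta_reduce
      rw [hfval t ht, hofpow _ (hnn1 t)]
    rw [h1, hfm1, hfm2, hrpow, ENNReal.zero_rpow_of_pos hApos, add_zero, cost]
  have hIg : ∫⁻ t, g t ^ A ∂μ = cost Q α S₂ J₂ := by
    rw [hint _ (hg.pow_const A)]
    have h1 : (∫⁻ t in Set.Ioi (0:ℝ), g t ^ A) = energy α J₂ S₂ := by
      rw [energy]
      refine setLIntegral_congr_fun measurableSet_Ioi ?_
      intro t ht; beta_reduce
      rw [hgval t ht, hofpow _ (hnn2 t)]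
    rw [h1, hgm1, hgm2, hrpow, ENNReal.zero_rpow_of_pos hApos, add_zero, cost]
  -- integral of (f+g)^A
  have hIfg : ∫⁻ t, (f + g) t ^ A ∂μ
      = energy α (J₁ ∪ J₂) S + Q.F S₁ J₁ + Q.F S₂ J₂ := by
    simp only [Pi.add_apply]
    have hint' := hint _ ((hf.add hg).pow_const A)
    simp only [Pi.add_apply] at hint'
    rw [hint']
    have h1 : (∫⁻ t in Set.Ioi (0:ℝ), (f t + g t) ^ A) = energy α (J₁ ∪ J₂) S := by
      rw [energy]
      refine setLIntegral_congr_fun measurableSet_Ioi ?_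
      intro t ht; beta_reduce
      have hsum : ∑ j ∈ J₁ ∪ J₂, S j t = (∑ j ∈ J₁, S₁ j t) + ∑ j ∈ J₂, S₂ j t := by
        rw [Finset.sum_union hdisj]
        congr 1
        · exact Finset.sum_congr rfl fun j hj => hS1 j hj t
        · exact Finset.sum_congr rfl fun j hj => hS2 j hj t
      rw [hfval t ht, hgval t ht, ← ENNReal.ofReal_add (hnn1 t) (hnn2 t), ← hsum,
        hofpow _ (hsum ▸ add_nonneg (hnn1 t) (hnn2 t))]
    rw [h1, hfm1, hgm1, hfm2, hgm2, add_zero, zero_add, hrpow, hrpow]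
  -- quality cost bound
  have hF : Q.F S (J₁ ∪ J₂) ≤ Q.F S₁ J₁ + Q.F S₂ J₂ := by
    refine le_trans (Q.subadd S J₁ J₂ hdisj) ?_
    have e1 : Q.F S J₁ = Q.F S₁ J₁ := by
      refine Q.profile_congr _ _ _ fun j hj t => ?_
      unfold work
      congr 1
      exact setIntegral_congr_fun measurableSet_Icc fun u _ => hS1 j hj u
    have e2 : Q.F S J₂ = Q.F S₂ J₂ := by
      refine Q.profile_congr _ _ _ fun j hj t => ?_
      unfold work
      congr 1
      exact setIntegral_congr_fun measurableSet_Icc fun u _ => hS2 j hj u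
    rw [e1, e2]
  -- Minkowski
  have hmink := ENNReal.lintegral_Lp_add_le (μ := μ) hf.aemeasurable hg.aemeasurable hA1
  rw [one_div, hIf, hIg, hIfg] at hmink
  calc cost Q α S (J₁ ∪ J₂)
      ≤ energy α (J₁ ∪ J₂) S + Q.F S₁ J₁ + Q.F S₂ J₂ := by
        rw [cost, add_assoc]; exact add_le_add_right hF _
    _ = ((energy α (J₁ ∪ J₂) S + Q.F S₁ J₁ + Q.F S₂ J₂) ^ (A⁻¹)) ^ A := (hrpow _).symm
    _ ≤ (cost Q α S₁ J₁ ^ (A⁻¹) + cost Q α S₂ J₂ ^ (A⁻¹)) ^ A :=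
        ENNReal.rpow_le_rpow hmink (le_of_lt hApos)
end

section
/- Let F be a monotone subadditive quality cost with integer exponent α ≥ 1, let Ĵ be a nonempty instance with 0 < OPT(Ĵ) < ∞, let 𝒥 be any instance, and set η₂ = OPT(Ĵ \ 𝒥)/OPT(Ĵ), where Ĵ \ 𝒥 is the set of predicted jobs that did not arrive and 𝒥 ∩ Ĵ is the set of correctly predicted jobs. Then OPT(𝒥 ∩ Ĵ) ≥ (1 − η₂^{1/α})^α · OPT(Ĵ). -/
/-! STATEMENT 5 (Corollary 3.3, first part): OPT(𝒥 ∩ Ĵ) ≥ (1 − η₂^{1/α})^α·OPT(Ĵ). -/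

open MeasureTheory Finset
open scoped ENNReal BigOperators Classical

/-- rpow with positive exponent commutes with infima over any index. -/
lemma rpow_iInf' {ι : Sort*} (g : ι → ℝ≥0∞) {y : ℝ} (hy : 0 < y) :
    (⨅ i, g i) ^ y = ⨅ i, g i ^ y := by
  have h := (ENNReal.orderIsoRpow y hy).map_iInf g
  simpa only [ENNReal.orderIsoRpow_apply] using h

/-- Two-point Minkowski-type combination inequality in `ℝ≥0∞`. -/
lemma aux_two_point {p : ℝ} (hp : 1 ≤ p) (E1 E2 F1 F2 : ℝ≥0∞) :
    (E1 ^ p⁻¹ + E2 ^ p⁻¹) ^ p + (F1 + F2) ≤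
      ((E1 + F1) ^ p⁻¹ + (E2 + F2) ^ p⁻¹) ^ p := by
  have hp0 : (0 : ℝ) < p := lt_of_lt_of_le one_pos hp
  have hF : F1 + F2 ≤ (F1 ^ p⁻¹ + F2 ^ p⁻¹) ^ p := by
    have h := ENNReal.add_rpow_le_rpow_add (F1 ^ p⁻¹) (F2 ^ p⁻¹) hp
    simpa [ENNReal.rpow_inv_rpow hp0.ne'] using h
  have hM := ENNReal.Lp_add_le (Finset.univ : Finset Bool)
      (fun b => if b then E1 ^ p⁻¹ else F1 ^ p⁻¹)
      (fun b => if b then E2 ^ p⁻¹ else F2 ^ p⁻¹) hp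
  simp only [Fintype.sum_bool, Bool.false_eq_true, if_true, if_false, one_div,
    ENNReal.rpow_inv_rpow hp0.ne'] at hM
  have hM' : (E1 ^ p⁻¹ + E2 ^ p⁻¹) ^ p + (F1 ^ p⁻¹ + F2 ^ p⁻¹) ^ p ≤
      ((E1 + F1) ^ p⁻¹ + (E2 + F2) ^ p⁻¹) ^ p := by
    have h := ENNReal.rpow_le_rpow hM hp0.le
    rwa [ENNReal.rpow_inv_rpow hp0.ne'] at h
  exact le_trans (add_le_add (le_refl _) hF) hM'

/-- Minkowski-type superadditivity of `OPT` over a disjoint union. -/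
lemma opt_union_rpow_le (Q : QualityCost) (α : ℕ) (hα : 1 ≤ α)
    (A B : Finset Job) (hd : Disjoint A B) :
    OPT Q α (A ∪ B) ^ ((α : ℝ)⁻¹) ≤
      OPT Q α A ^ ((α : ℝ)⁻¹) + OPT Q α B ^ ((α : ℝ)⁻¹) := by
  set p : ℝ := (α : ℝ) with hpdef
  have hp : (1 : ℝ) ≤ p := by rw [hpdef]; exact_mod_cast hα
  have hp0 : (0 : ℝ) < p := lt_of_lt_of_le one_pos hp
  have hs0 : (0 : ℝ) < p⁻¹ := by positivity
  have hpow : ∀ x : ℝ, 0 ≤ x →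
      ENNReal.ofReal (x ^ α) = (ENNReal.ofReal x) ^ p := fun x hx => by
    rw [ENNReal.ofReal_pow hx, ← ENNReal.rpow_natCast]
  -- core inequality for a pair of feasible schedules
  have core : ∀ S1, Feasible A S1 → ∀ S2, Feasible B S2 →
      OPT Q α (A ∪ B) ≤
        ((cost Q α S1 A) ^ p⁻¹ + (cost Q α S2 B) ^ p⁻¹) ^ p := by
    intro S1 h1 S2 h2
    classical
    set S : Sched := fun j t => if j ∈ A then S1 j t else S2 j t with hS
    have hSA : ∀ j ∈ A, S j = S1 j := fun j hj => funext fun u => by simp [hS, hj]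
    have hSB : ∀ j ∈ B, S j = S2 j := fun j hj => funext fun u => by
      have hjA : j ∉ A := fun h => (Finset.disjoint_left.1 hd h) hj
      simp [hS, hjA]
    have hfeas : Feasible (A ∪ B) S := by
      intro j hj
      rcases Finset.mem_union.1 hj with hjA | hjB
      · rw [hSA j hjA]; exact h1 j hjA
      · rw [hSB j hjB]; exact h2 j hjB
    set f : ℝ → ℝ≥0∞ := fun t => ENNReal.ofReal (∑ j ∈ A, S1 j t) with hf
    set g : ℝ → ℝ≥0∞ := fun t => ENNReal.ofReal (∑ j ∈ B, S2 j t) with hg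
    have hfm : Measurable f :=
      ENNReal.measurable_ofReal.comp
        (Finset.measurable_sum A fun j hj => (h1 j hj).1)
    have hgm : Measurable g :=
      ENNReal.measurable_ofReal.comp
        (Finset.measurable_sum B fun j hj => (h2 j hj).1)
    have hsum : ∀ t : ℝ, ENNReal.ofReal ((∑ j ∈ A ∪ B, S j t) ^ α)
        = ((f + g) t) ^ p := by
      intro t
      have hA : ∑ j ∈ A, S j t = ∑ j ∈ A, S1 j t :=
        Finset.sum_congr rfl fun j hj => by rw [hSA j hj]
      have hB : ∑ j ∈ B, S j t = ∑ j ∈ B, S2 j t :=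
        Finset.sum_congr rfl fun j hj => by rw [hSB j hj]
      have ha : 0 ≤ ∑ j ∈ A, S1 j t :=
        Finset.sum_nonneg fun j hj => (h1 j hj).2.1 t
      have hb : 0 ≤ ∑ j ∈ B, S2 j t :=
        Finset.sum_nonneg fun j hj => (h2 j hj).2.1 t
      rw [Finset.sum_union hd, hA, hB, hpow _ (by positivity),
        ENNReal.ofReal_add ha hb]
      rfl
    have hE : energy α (A ∪ B) S = ∫⁻ t in Set.Ioi (0:ℝ), ((f + g) t) ^ p := by
      unfold energy; exact lintegral_congr hsum
    have hE1 : energy α A S1 = ∫⁻ t in Set.Ioi (0:ℝ), (f t) ^ p := by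
      unfold energy
      refine lintegral_congr fun t => ?_
      have ha : 0 ≤ ∑ j ∈ A, S1 j t :=
        Finset.sum_nonneg fun j hj => (h1 j hj).2.1 t
      rw [hpow _ ha]
    have hE2 : energy α B S2 = ∫⁻ t in Set.Ioi (0:ℝ), (g t) ^ p := by
      unfold energy
      refine lintegral_congr fun t => ?_
      have hb : 0 ≤ ∑ j ∈ B, S2 j t :=
        Finset.sum_nonneg fun j hj => (h2 j hj).2.1 t
      rw [hpow _ hb]
    have hMink := ENNReal.lintegral_Lp_add_le
      (μ := (volume : Measure ℝ).restrict (Set.Ioi 0))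
      hfm.aemeasurable hgm.aemeasurable hp
    have hEle : energy α (A ∪ B) S ≤
        ((energy α A S1) ^ p⁻¹ + (energy α B S2) ^ p⁻¹) ^ p := by
      rw [hE, hE1, hE2]
      calc (∫⁻ t in Set.Ioi (0:ℝ), ((f + g) t) ^ p)
          = ((∫⁻ t in Set.Ioi (0:ℝ), ((f + g) t) ^ p) ^ (1/p)) ^ p := by
            rw [one_div, ENNReal.rpow_inv_rpow hp0.ne']
        _ ≤ ((∫⁻ t in Set.Ioi (0:ℝ), (f t) ^ p) ^ (1/p)
              + (∫⁻ t in Set.Ioi (0:ℝ), (g t) ^ p) ^ (1/p)) ^ p :=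
            ENNReal.rpow_le_rpow hMink hp0.le
        _ = _ := by rw [one_div]
    have hF1 : Q.F S A = Q.F S1 A :=
      Q.profile_congr S S1 A fun j hj t => by
        unfold work; rw [hSA j hj]
    have hF2 : Q.F S B = Q.F S2 B :=
      Q.profile_congr S S2 B fun j hj t => by
        unfold work; rw [hSB j hj]
    have hFle : Q.F S (A ∪ B) ≤ Q.F S1 A + Q.F S2 B := by
      calc Q.F S (A ∪ B) ≤ Q.F S A + Q.F S B := Q.subadd S A B hd
        _ = Q.F S1 A + Q.F S2 B := by rw [hF1, hF2]
    have hcost : cost Q α S (A ∪ B) ≤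
        ((cost Q α S1 A) ^ p⁻¹ + (cost Q α S2 B) ^ p⁻¹) ^ p := by
      calc cost Q α S (A ∪ B)
          = energy α (A ∪ B) S + Q.F S (A ∪ B) := rfl
        _ ≤ ((energy α A S1) ^ p⁻¹ + (energy α B S2) ^ p⁻¹) ^ p
              + (Q.F S1 A + Q.F S2 B) := add_le_add hEle hFle
        _ ≤ ((energy α A S1 + Q.F S1 A) ^ p⁻¹
              + (energy α B S2 + Q.F S2 B) ^ p⁻¹) ^ p :=
            aux_two_point hp _ _ _ _
        _ = _ := rfl
    exact le_trans (iInf₂_le S hfeas) hcost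
  -- pass to the infima
  have hO1 : OPT Q α A ^ p⁻¹
      = ⨅ (S1 : Sched) (_ : Feasible A S1), (cost Q α S1 A) ^ p⁻¹ := by
    rw [OPT, rpow_iInf' _ hs0]
    exact iInf_congr fun S1 => rpow_iInf' _ hs0
  have hO2 : OPT Q α B ^ p⁻¹
      = ⨅ (S2 : Sched) (_ : Feasible B S2), (cost Q α S2 B) ^ p⁻¹ := by
    rw [OPT, rpow_iInf' _ hs0]
    exact iInf_congr fun S2 => rpow_iInf' _ hs0
  rw [hO1, hO2, ENNReal.iInf_add]
  refine le_iInf fun S1 => ?_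
  rw [ENNReal.iInf_add]
  refine le_iInf fun h1 => ?_
  rw [ENNReal.add_iInf]
  refine le_iInf fun S2 => ?_
  rw [ENNReal.add_iInf]
  refine le_iInf fun h2 => ?_
  have h := ENNReal.rpow_le_rpow (core S1 h1 S2 h2) hs0.le
  rwa [ENNReal.rpow_rpow_inv hp0.ne'] at h

/-- **Corollary 3.3 (first part).** With `η₂ = OPT(Ĵ \ 𝒥)/OPT(Ĵ)`, one has
`OPT(𝒥 ∩ Ĵ) ≥ (1 − η₂^{1/α})^α · OPT(Ĵ)`. -/
theorem opt_correctly_predicted_lower_bound (Q : QualityCost) (α : ℕ) (hα : 1 ≤ α)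
    (Jhat J : Finset Job) (hJhatV : ValidInstance Jhat) (hJV : ValidInstance J)
    (hne : Jhat.Nonempty) (hpos : 0 < OPT Q α Jhat) (hfin : OPT Q α Jhat < ⊤)
    (η₂ : ℝ≥0∞) (hη₂ : η₂ = OPT Q α (Jhat \ J) / OPT Q α Jhat) :
    (1 - η₂ ^ ((α : ℝ)⁻¹)) ^ (α : ℝ) * OPT Q α Jhat ≤ OPT Q α (J ∩ Jhat) := by
  have hp : (1 : ℝ) ≤ (α : ℝ) := by exact_mod_cast hα
  have hp0 : (0 : ℝ) < (α : ℝ) := lt_of_lt_of_le one_pos hp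
  have hs0 : (0 : ℝ) < (α : ℝ)⁻¹ := by positivity
  have hAB : (J ∩ Jhat) ∪ (Jhat \ J) = Jhat := by
    ext x
    simp only [Finset.mem_union, Finset.mem_inter, Finset.mem_sdiff]
    tauto
  have hd : Disjoint (J ∩ Jhat) (Jhat \ J) := by
    rw [Finset.disjoint_left]
    intro x hx hx'
    exact (Finset.mem_sdiff.1 hx').2 (Finset.mem_inter.1 hx).1
  have hMink : OPT Q α Jhat ^ ((α : ℝ)⁻¹) ≤
      OPT Q α (J ∩ Jhat) ^ ((α : ℝ)⁻¹) + OPT Q α (Jhat \ J) ^ ((α : ℝ)⁻¹) := by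
    have h := opt_union_rpow_le Q α hα (J ∩ Jhat) (Jhat \ J) hd
    rwa [hAB] at h
  by_cases hcase : 1 ≤ η₂ ^ ((α : ℝ)⁻¹)
  · rw [tsub_eq_zero_of_le hcase, ENNReal.zero_rpow_of_pos hp0, zero_mul]
    exact zero_le
  · have hO2 : OPT Q α (Jhat \ J) = η₂ * OPT Q α Jhat := by
      rw [hη₂, ENNReal.div_mul_cancel hpos.ne' hfin.ne]
    rw [hO2, ENNReal.mul_rpow_of_nonneg _ _ hs0.le] at hMink
    have hfinOs : OPT Q α Jhat ^ ((α : ℝ)⁻¹) ≠ ⊤ :=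
      ENNReal.rpow_ne_top_of_nonneg hs0.le hfin.ne
    have hkey : (1 - η₂ ^ ((α : ℝ)⁻¹)) * OPT Q α Jhat ^ ((α : ℝ)⁻¹) ≤
        OPT Q α (J ∩ Jhat) ^ ((α : ℝ)⁻¹) := by
      rw [ENNReal.sub_mul (fun _ _ => hfinOs), one_mul]
      exact tsub_le_iff_right.2 hMink
    have h := ENNReal.rpow_le_rpow hkey hp0.le
    rwa [ENNReal.mul_rpow_of_nonneg _ _ hp0.le, ENNReal.rpow_inv_rpow hp0.ne',
      ENNReal.rpow_inv_rpow hp0.ne'] at h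
end

section
/- Fix an integer α ≥ 1 and a positive integer D, and consider the energy minimization with uniform deadlines objective. Let w_i^{real} and w_i^{pred} (i ∈ ℕ, finitely many nonzero) be nonnegative integers, let 𝒥 (resp. Ĵ) be the instance consisting, for each i, of w_i^{real} (resp. w_i^{pred}) unit-work jobs released at time i with deadline i + D, let 𝒥 \ Ĵ be the instance with max(w_i^{real} − w_i^{pred}, 0) unit-work jobs released at time i with deadline i + D, and symmetrically for Ĵ \ 𝒥. Then max{ OPT(𝒥 \ Ĵ), OPT(Ĵ \ 𝒥) } ≤ D·Σ_i |w_i^{real} − w_i^{pred}|^α. -/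
/-!
STATEMENT 18: for energy minimization with uniform deadlines, the optimal cost
of the extra/missing jobs is bounded by `D` times the workload-error
`Σ_i |w_i^{real} − w_i^{pred}|^α` of Bamas–Maggiori–Rohwedder–Svensson.
-/

open MeasureTheory Finset
open scoped ENNReal BigOperators Classical

/-- A job with a deadline: identifier, release time, processing time, deadline. -/
structure JobD where
  id : ℕ
  r : ℝ
  p : ℝ
  d : ℝ

noncomputable instance : DecidableEq JobD := Classical.decEq _

/-- A schedule: speed functions for jobs. -/
abbrev SchedD := JobD → ℝ → ℝ

/-- `S` is feasible for the deadline objective on `K`: every job is fully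
processed within its window `[r_j, d_j]`. -/
def FeasibleD (K : Finset JobD) (S : SchedD) : Prop :=
  ∀ j ∈ K, Measurable (S j) ∧ (∀ t, 0 ≤ S j t) ∧
    (∀ t, t < j.r ∨ j.d < t → S j t = 0) ∧
    (∫ t in Set.Icc j.r j.d, S j t) = j.p

/-- Energy consumption of schedule `S` on instance `K`, with exponent `α`. -/
noncomputable def energyD (α : ℕ) (K : Finset JobD) (S : SchedD) : ℝ≥0∞ :=
  ∫⁻ t in Set.Ioi (0 : ℝ), ENNReal.ofReal ((∑ j ∈ K, S j t) ^ α)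

/-- Optimal energy of an instance with deadlines. -/
noncomputable def OPTD (α : ℕ) (K : Finset JobD) : ℝ≥0∞ :=
  ⨅ (S : SchedD) (_ : FeasibleD K S), energyD α K S

/-- `K` consists, for every `i : ℕ`, of exactly `w i` unit-work jobs released
at time `i` with deadline `i + D`. -/
def UniformWorkload (D : ℕ) (w : ℕ → ℕ) (K : Finset JobD) : Prop :=
  (∀ j ∈ K, ∃ i : ℕ, j.r = (i : ℝ) ∧ j.d = (i : ℝ) + (D : ℝ) ∧ j.p = 1) ∧
  (∀ i : ℕ, (K.filter fun j => j.r = (i : ℝ)).card = w i)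

/-- The greedy schedule: run every job at speed 1 on the first unit of its window. -/
noncomputable def greedyS : SchedD := fun j t =>
  Set.indicator (Set.Ico j.r (j.r + 1)) (fun _ => (1 : ℝ)) t

lemma greedy_feasible (D : ℕ) (hD : 0 < D) (w : ℕ → ℕ) (K : Finset JobD)
    (hK : UniformWorkload D w K) : FeasibleD K greedyS := by
  intro j hj
  obtain ⟨i, hr, hd, hp⟩ := hK.1 j hj
  have hD1 : (1 : ℝ) ≤ D := by exact_mod_cast hD
  refine ⟨?_, ?_, ?_, ?_⟩
  · exact (measurable_const.indicator measurableSet_Ico)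
  · intro t
    unfold greedyS
    by_cases h : t ∈ Set.Ico j.r (j.r + 1) <;> simp [Set.indicator_apply, h]
  · intro t ht
    unfold greedyS
    rw [Set.indicator_apply_eq_zero]
    intro htmem
    rcases ht with ht | ht
    · exact absurd htmem.1 (not_le.mpr ht)
    · exfalso
      have : t < j.r + 1 := htmem.2
      rw [hd] at ht
      rw [hr] at htmem
      have h2 := htmem.2
      linarith [ht, h2]
  · have hsub : Set.Ico j.r (j.r + 1) ⊆ Set.Icc j.r j.d := by
      intro t ht
      refine ⟨ht.1, ?_⟩
      have h2 := ht.2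
      rw [hr] at h2
      rw [hd]
      linarith
    unfold greedyS
    rw [setIntegral_indicator measurableSet_Ico,
      Set.inter_eq_self_of_subset_right hsub]
    simp [hp]

lemma greedy_sum (D : ℕ) (w : ℕ → ℕ) (K : Finset JobD)
    (hK : UniformWorkload D w K) (t : ℝ) (ht : 0 ≤ t) :
    (∑ j ∈ K, greedyS j t) = (w ⌊t⌋₊ : ℝ) := by
  have : ∀ j ∈ K, greedyS j t = if j.r = (⌊t⌋₊ : ℝ) then (1:ℝ) else 0 := by
    intro j hj
    obtain ⟨i, hr, _, _⟩ := hK.1 j hj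
    unfold greedyS
    rw [Set.indicator_apply]
    have hmem : t ∈ Set.Ico j.r (j.r + 1) ↔ j.r = (⌊t⌋₊ : ℝ) := by
      rw [hr, Set.mem_Ico]
      constructor
      · rintro ⟨h1, h2⟩
        have : ⌊t⌋₊ = i := by
          rw [Nat.floor_eq_iff ht]
          exact ⟨h1, h2⟩
        rw [this]
      · intro h
        have hi : i = ⌊t⌋₊ := by exact_mod_cast h
        subst hi
        exact ⟨Nat.floor_le ht, Nat.lt_floor_add_one t⟩
    by_cases h : t ∈ Set.Ico j.r (j.r + 1)
    · rw [if_pos h, if_pos (hmem.mp h)]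
    · rw [if_neg h, if_neg (fun hh => h (hmem.mpr hh))]
  rw [Finset.sum_congr rfl this, Finset.sum_boole]
  rw [hK.2 ⌊t⌋₊]

lemma OPT_le_sum (α : ℕ) (hα : 1 ≤ α) (D : ℕ) (hD : 0 < D) (N : ℕ) (w : ℕ → ℕ)
    (hw : ∀ i, N ≤ i → w i = 0) (K : Finset JobD) (hK : UniformWorkload D w K) :
    OPTD α K ≤ ∑ i ∈ Finset.range N, ENNReal.ofReal ((w i : ℝ) ^ α) := by
  have hfeas := greedy_feasible D hD w K hK
  refine le_trans (iInf₂_le greedyS hfeas) ?_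
  unfold energyD
  have hbound : ∀ t ∈ Set.Ioi (0:ℝ),
      ENNReal.ofReal ((∑ j ∈ K, greedyS j t) ^ α) ≤
      ∑ i ∈ Finset.range N, Set.indicator (Set.Ico (i:ℝ) ((i:ℝ)+1))
        (fun _ => ENNReal.ofReal ((w i : ℝ) ^ α)) t := by
    intro t ht
    have ht' : 0 ≤ t := le_of_lt ht
    rw [greedy_sum D w K hK t ht']
    by_cases hN : ⌊t⌋₊ < N
    · have hmem : t ∈ Set.Ico ((⌊t⌋₊:ℕ):ℝ) ((⌊t⌋₊:ℝ)+1) :=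
        ⟨Nat.floor_le ht', Nat.lt_floor_add_one t⟩
      calc ENNReal.ofReal ((w ⌊t⌋₊ : ℝ) ^ α)
          = Set.indicator (Set.Ico ((⌊t⌋₊:ℕ):ℝ) ((⌊t⌋₊:ℝ)+1))
            (fun _ => ENNReal.ofReal ((w ⌊t⌋₊ : ℝ) ^ α)) t := by
            rw [Set.indicator_of_mem hmem]
        _ ≤ _ := Finset.single_le_sum (f := fun (i:ℕ) => Set.indicator
            (Set.Ico ((i:ℕ):ℝ) (((i:ℕ):ℝ)+1))
            (fun _ => ENNReal.ofReal ((w i : ℝ) ^ α)) t)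
            (fun i _ => zero_le) (Finset.mem_range.mpr hN)
    · rw [hw ⌊t⌋₊ (le_of_not_gt hN)]
      simp [zero_pow (by omega : α ≠ 0)]
  calc ∫⁻ t in Set.Ioi (0:ℝ), ENNReal.ofReal ((∑ j ∈ K, greedyS j t) ^ α)
      ≤ ∫⁻ t in Set.Ioi (0:ℝ), ∑ i ∈ Finset.range N,
          Set.indicator (Set.Ico (i:ℝ) ((i:ℝ)+1))
            (fun _ => ENNReal.ofReal ((w i : ℝ) ^ α)) t := by
        refine lintegral_mono_ae ?_
        filter_upwards [ae_restrict_mem measurableSet_Ioi] with t ht using hbound t ht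
    _ ≤ ∫⁻ t, ∑ i ∈ Finset.range N,
          Set.indicator (Set.Ico (i:ℝ) ((i:ℝ)+1))
            (fun _ => ENNReal.ofReal ((w i : ℝ) ^ α)) t := setLIntegral_le_lintegral _ _
    _ = ∑ i ∈ Finset.range N, ∫⁻ t, Set.indicator (Set.Ico (i:ℝ) ((i:ℝ)+1))
            (fun _ => ENNReal.ofReal ((w i : ℝ) ^ α)) t := by
        rw [lintegral_finset_sum]
        intro i _
        exact measurable_const.indicator measurableSet_Ico
    _ = ∑ i ∈ Finset.range N, ENNReal.ofReal ((w i : ℝ) ^ α) := by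
        refine Finset.sum_congr rfl fun i _ => ?_
        rw [lintegral_indicator measurableSet_Ico, setLIntegral_const,
          Real.volume_Ico]
        simp

lemma cast_sub_le_abs (a b : ℕ) : ((a - b : ℕ) : ℝ) ≤ |(a:ℝ) - (b:ℝ)| := by
  rcases le_total b a with h | h
  · rw [Nat.cast_sub h]
    exact le_abs_self _
  · rw [Nat.sub_eq_zero_of_le h]
    simp [abs_nonneg]


/-- **Lemma D.1 of Appendix D (comparison with the error of
Bamas et al.).** For uniform deadlines, writing `𝒥 \ Ĵ` and `Ĵ \ 𝒥` for the
instances consisting of the extra and the missing unit jobs at each time step,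
`max{OPT(𝒥 \ Ĵ), OPT(Ĵ \ 𝒥)} ≤ D·Σ_i |w_i^{real} − w_i^{pred}|^α`. -/
theorem deadline_error_comparison (α : ℕ) (hα : 1 ≤ α) (D : ℕ) (hD : 0 < D)
    (wreal wpred : ℕ → ℕ) (N : ℕ) (hsupp : ∀ i, N ≤ i → wreal i = 0 ∧ wpred i = 0)
    (J Jhat Jminus Jplus : Finset JobD)
    (hJ : UniformWorkload D wreal J)
    (hJhat : UniformWorkload D wpred Jhat)
    (hJminus : UniformWorkload D (fun i => wreal i - wpred i) Jminus)
    (hJplus : UniformWorkload D (fun i => wpred i - wreal i) Jplus) :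
    max (OPTD α Jminus) (OPTD α Jplus) ≤
      ENNReal.ofReal ((D : ℝ) * ∑' i : ℕ, |(wreal i : ℝ) - (wpred i : ℝ)| ^ α) := by
  have hα0 : α ≠ 0 := by omega
  -- the tsum equals a finite sum
  have htsum : (∑' i : ℕ, |(wreal i : ℝ) - (wpred i : ℝ)| ^ α) =
      ∑ i ∈ Finset.range N, |(wreal i : ℝ) - (wpred i : ℝ)| ^ α := by
    refine tsum_eq_sum ?_
    intro i hi
    have hN : N ≤ i := by
      by_contra h
      exact hi (Finset.mem_range.mpr (by omega))
    obtain ⟨h1, h2⟩ := hsupp i hN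
    rw [h1, h2]
    simp [zero_pow hα0]
  -- bound for one of the two instances
  have key : ∀ (w : ℕ → ℕ), (∀ i, N ≤ i → w i = 0) →
      (∀ i, ((w i : ℝ)) ≤ |(wreal i : ℝ) - (wpred i : ℝ)|) →
      ∀ (K : Finset JobD), UniformWorkload D w K →
      OPTD α K ≤ ENNReal.ofReal ((D : ℝ) * ∑' i : ℕ,
        |(wreal i : ℝ) - (wpred i : ℝ)| ^ α) := by
    intro w hw hwle K hK
    refine le_trans (OPT_le_sum α hα D hD N w hw K hK) ?_
    rw [htsum]
    have hterm : ∀ i, (0:ℝ) ≤ |(wreal i : ℝ) - (wpred i : ℝ)| ^ α :=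
      fun i => pow_nonneg (abs_nonneg _) _
    calc ∑ i ∈ Finset.range N, ENNReal.ofReal ((w i : ℝ) ^ α)
        ≤ ∑ i ∈ Finset.range N,
            ENNReal.ofReal (|(wreal i : ℝ) - (wpred i : ℝ)| ^ α) := by
          refine Finset.sum_le_sum fun i _ => ENNReal.ofReal_le_ofReal ?_
          exact pow_le_pow_left₀ (Nat.cast_nonneg _) (hwle i) α
      _ = ENNReal.ofReal (∑ i ∈ Finset.range N,
            |(wreal i : ℝ) - (wpred i : ℝ)| ^ α) :=
          (ENNReal.ofReal_sum_of_nonneg fun i _ => hterm i).symm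
      _ ≤ ENNReal.ofReal ((D : ℝ) * ∑ i ∈ Finset.range N,
            |(wreal i : ℝ) - (wpred i : ℝ)| ^ α) := by
          refine ENNReal.ofReal_le_ofReal ?_
          have hsnn : (0:ℝ) ≤ ∑ i ∈ Finset.range N,
              |(wreal i : ℝ) - (wpred i : ℝ)| ^ α :=
            Finset.sum_nonneg fun i _ => hterm i
          have hD1 : (1:ℝ) ≤ (D:ℝ) := by exact_mod_cast hD
          nlinarith
  refine max_le ?_ ?_
  · refine key (fun i => wreal i - wpred i) (fun i hi => by
      obtain ⟨h1, h2⟩ := hsupp i hi; simp [h1, h2]) (fun i => cast_sub_le_abs _ _)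
      Jminus hJminus
  · refine key (fun i => wpred i - wreal i) (fun i hi => by
      obtain ⟨h1, h2⟩ := hsupp i hi; simp [h1, h2]) (fun i => by
        rw [abs_sub_comm]; exact cast_sub_le_abs _ _)
      Jplus hJplus
end
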